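/- arXiv:2103.07550 — 2 statements merged into one kernel-verified Lean document; each statement's English description precedes it below -/
import Mathlib

section
/- For every integer n ≥ 1, ∫₀¹ x · f_4^{(n)}(x) / (π·√(x·(1−x))) dx = 1/4, where f_4^{(n)} denotes the n-th iterate of f_4(x) = 4·x·(1−x). Hence the autocorrelation of the logistic map at r = 4 with respect to its invariant arcsine measure vanishes at every positive lag. -/
open Real MeasureTheory

lemma iter_logistic_sin (n : ℕ) (θ : ℝ) :
    (fun y : ℝ => 4 * y * (1 - y))^[n] (Real.sin θ ^ 2)
      = Real.sin ((2:ℝ) ^ n * θ) ^ 2 := by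
  induction n with
  | zero => simp
  | succ n ih =>
    rw [Function.iterate_succ_apply', ih]
    have h2 : (2:ℝ) ^ (n+1) * θ = 2 * ((2:ℝ) ^ n * θ) := by ring
    rw [h2, Real.sin_two_mul]
    have h := Real.sin_sq_add_cos_sq ((2:ℝ) ^ n * θ)
    linear_combination (-4 * Real.sin ((2:ℝ) ^ n * θ) ^ 2) * h

lemma cos_integral (k : ℝ) (hk : k ≠ 0) :
    ∫ θ in (0:ℝ)..(π/2), Real.cos (k * θ) = Real.sin (k * (π/2)) / k := by
  rw [intervalIntegral.integral_comp_mul_left (fun x => Real.cos x) hk]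
  simp [Real.sin_pi, div_eq_inv_mul]

/-- For every `n ≥ 1`, `∫₀¹ x · f₄^[n](x) / (π·√(x·(1−x))) dx = 1/4`, where `f₄^[n]`
is the `n`-th iterate of the logistic map `f₄(x) = 4·x·(1−x)`: the autocorrelation of
the logistic map at `r = 4` vanishes at every positive lag. -/
theorem logistic_four_autocorrelation_vanishes_all_lags :
    ∀ n : ℕ, 1 ≤ n →
      ∫ x in Set.Ioo (0 : ℝ) 1,
        x * ((fun y : ℝ => 4 * y * (1 - y))^[n] x) / (π * Real.sqrt (x * (1 - x)))
        = 1 / 4 := by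
  intro n hn
  set g : ℝ → ℝ := fun x =>
    x * ((fun y : ℝ => 4 * y * (1 - y))^[n] x) / (π * Real.sqrt (x * (1 - x))) with hg
  -- image of sin^2 on (0, π/2)
  have himg : (fun θ : ℝ => Real.sin θ ^ 2) '' Set.Ioo 0 (π/2) = Set.Ioo (0:ℝ) 1 := by
    ext x
    constructor
    · rintro ⟨θ, ⟨h0, h1⟩, rfl⟩
      have hs : 0 < Real.sin θ := Real.sin_pos_of_pos_of_lt_pi h0 (by linarith [Real.pi_pos])
      have hc : 0 < Real.cos θ := Real.cos_pos_of_mem_Ioo ⟨by linarith [Real.pi_pos], h1⟩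
      have h := Real.sin_sq_add_cos_sq θ
      dsimp only
      exact ⟨by positivity, by nlinarith [mul_pos hc hc]⟩
    · rintro ⟨h0, h1⟩
      refine ⟨Real.arcsin (Real.sqrt x), ⟨?_, ?_⟩, ?_⟩
      · exact Real.arcsin_pos.2 (Real.sqrt_pos.2 h0)
      · exact Real.arcsin_lt_pi_div_two.2 (by
          rw [show (1:ℝ) = Real.sqrt 1 by simp]
          exact Real.sqrt_lt_sqrt (le_of_lt h0) h1)
      · dsimp only
        rw [Real.sin_arcsin (by linarith [Real.sqrt_nonneg x]) (Real.sqrt_le_one.2 h1.le),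
          Real.sq_sqrt h0.le]
  have hderiv : ∀ θ ∈ Set.Ioo (0:ℝ) (π/2),
      HasDerivWithinAt (fun θ : ℝ => Real.sin θ ^ 2) (2 * Real.sin θ * Real.cos θ)
        (Set.Ioo 0 (π/2)) θ := by
    intro θ _
    have := ((Real.hasDerivAt_sin θ).fun_pow 2).hasDerivWithinAt
      (s := Set.Ioo (0:ℝ) (π/2))
    simpa [mul_comm, mul_assoc, mul_left_comm] using this
  have hinj : Set.InjOn (fun θ : ℝ => Real.sin θ ^ 2) (Set.Ioo 0 (π/2)) := by
    intro a ha b hb hab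
    have hsa : 0 ≤ Real.sin a := Real.sin_nonneg_of_nonneg_of_le_pi ha.1.le
      (by linarith [ha.2, Real.pi_pos])
    have hsb : 0 ≤ Real.sin b := Real.sin_nonneg_of_nonneg_of_le_pi hb.1.le
      (by linarith [hb.2, Real.pi_pos])
    have hab' : Real.sin a ^ 2 = Real.sin b ^ 2 := hab
    have h' : (Real.sin a - Real.sin b) * (Real.sin a + Real.sin b) = 0 := by
      linear_combination hab'
    have hss : Real.sin a = Real.sin b := by
      rcases mul_eq_zero.1 h' with h | h
      · linarith
      · linarith
    exact Real.injOn_sin ⟨by linarith [ha.1, Real.pi_pos], by linarith [ha.2]⟩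
      ⟨by linarith [hb.1, Real.pi_pos], by linarith [hb.2]⟩ hss
  have hchg : ∫ x in Set.Ioo (0:ℝ) 1, g x
      = ∫ θ in Set.Ioo (0:ℝ) (π/2),
          |2 * Real.sin θ * Real.cos θ| • g (Real.sin θ ^ 2) := by
    rw [← himg]
    exact integral_image_eq_integral_abs_deriv_smul measurableSet_Ioo hderiv hinj g
  -- simplify integrand on (0, π/2)
  have hcongr : ∫ θ in Set.Ioo (0:ℝ) (π/2),
        |2 * Real.sin θ * Real.cos θ| • g (Real.sin θ ^ 2)
      = ∫ θ in Set.Ioo (0:ℝ) (π/2),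
        (2/π) * (Real.sin θ ^ 2 * Real.sin ((2:ℝ)^n * θ) ^ 2) := by
    apply MeasureTheory.setIntegral_congr_fun measurableSet_Ioo
    intro θ hθ
    have hs : 0 < Real.sin θ := Real.sin_pos_of_pos_of_lt_pi hθ.1 (by linarith [hθ.2, Real.pi_pos])
    have hc : 0 < Real.cos θ := Real.cos_pos_of_mem_Ioo ⟨by linarith [hθ.1, Real.pi_pos], hθ.2⟩
    have hsqrt : Real.sqrt (Real.sin θ ^ 2 * (1 - Real.sin θ ^ 2))
        = Real.sin θ * Real.cos θ := by
      have h1 : (1 : ℝ) - Real.sin θ ^ 2 = Real.cos θ ^ 2 := by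
        have := Real.sin_sq_add_cos_sq θ; linarith
      rw [h1, show Real.sin θ ^ 2 * Real.cos θ ^ 2 = (Real.sin θ * Real.cos θ)^2 by ring,
        Real.sqrt_sq (by positivity)]
    simp only [hg, iter_logistic_sin, smul_eq_mul, hsqrt,
      abs_of_pos (by positivity : (0:ℝ) < 2 * Real.sin θ * Real.cos θ)]
    have hπ : π ≠ 0 := Real.pi_ne_zero
    field_simp
  -- compute the trig integral
  have hm2 : (2:ℝ) ≤ (2:ℝ)^n := by
    calc (2:ℝ) = 2^1 := by norm_num
    _ ≤ 2^n := by
      apply pow_le_pow_right₀ (by norm_num) hn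
  set m : ℝ := (2:ℝ)^n with hmdef
  have hkey : ∀ θ : ℝ, Real.sin θ ^ 2 * Real.sin (m * θ) ^ 2
      = 1/4 - Real.cos (2*θ)/4 - Real.cos (2*(m*θ))/4
        + Real.cos (2*(m*θ) + 2*θ)/8 + Real.cos (2*(m*θ) - 2*θ)/8 := by
    intro θ
    have pa := Real.sin_sq_add_cos_sq θ
    have pb := Real.sin_sq_add_cos_sq (m*θ)
    have ca : Real.cos θ ^ 2 = 1 - Real.sin θ ^ 2 := by linarith
    have cb : Real.cos (m*θ) ^ 2 = 1 - Real.sin (m*θ) ^ 2 := by linarith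
    rw [Real.cos_add, Real.cos_sub, Real.cos_two_mul', Real.cos_two_mul', ca, cb]
    ring
  have hIoo : ∫ θ in Set.Ioo (0:ℝ) (π/2),
        (2/π) * (Real.sin θ ^ 2 * Real.sin (m * θ) ^ 2)
      = ∫ θ in (0:ℝ)..(π/2), (2/π) * (Real.sin θ ^ 2 * Real.sin (m * θ) ^ 2) := by
    rw [intervalIntegral.integral_of_le (by positivity), ← MeasureTheory.integral_Ioc_eq_integral_Ioo]
  rw [hchg, hcongr, hIoo]
  have hsin0 : ∀ j : ℤ, ∀ k : ℝ, k * (π/2) = (j:ℝ) * π → Real.sin (k * (π/2)) = 0 := by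
    intro j k hk
    rw [hk]; exact Real.sin_int_mul_pi j
  -- individual integrals
  have hcont : ∀ k : ℝ, IntervalIntegrable (fun θ => Real.cos (k*θ)) volume 0 (π/2) := by
    intro k
    exact (Real.continuous_cos.comp (continuous_const.mul continuous_id)).intervalIntegrable _ _
  have hI1 : ∫ θ in (0:ℝ)..(π/2), Real.cos (2*θ) = 0 := by
    rw [cos_integral 2 (by norm_num), hsin0 1 2 (by push_cast; ring)]; simp
  have hmne : m ≠ 0 := by positivity
  -- m = (2^n : ℕ) cast
  have hmnat : m = ((2^n : ℕ) : ℝ) := by push_cast [hmdef]; ring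
  have hI2 : ∫ θ in (0:ℝ)..(π/2), Real.cos (2*(m*θ)) = 0 := by
    have : ∀ θ:ℝ, 2*(m*θ) = (2*m)*θ := fun θ => by ring
    simp_rw [this]
    rw [cos_integral (2*m) (by positivity), hsin0 (2^n) (2*m) (by rw [hmnat]; push_cast; ring)]
    simp
  have hI3 : ∫ θ in (0:ℝ)..(π/2), Real.cos (2*(m*θ) + 2*θ) = 0 := by
    have : ∀ θ:ℝ, 2*(m*θ) + 2*θ = (2*m+2)*θ := fun θ => by ring
    simp_rw [this]
    rw [cos_integral (2*m+2) (by positivity),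
      hsin0 (2^n + 1) (2*m+2) (by rw [hmnat]; push_cast; ring)]
    simp
  have hI4 : ∫ θ in (0:ℝ)..(π/2), Real.cos (2*(m*θ) - 2*θ) = 0 := by
    have : ∀ θ:ℝ, 2*(m*θ) - 2*θ = (2*m-2)*θ := fun θ => by ring
    simp_rw [this]
    rw [cos_integral (2*m-2) (by intro h; nlinarith),
      hsin0 (2^n - 1) (2*m-2) (by rw [hmnat]; push_cast; ring)]
    simp
  -- assemble
  simp_rw [hkey]
  have hπ : π ≠ 0 := Real.pi_ne_zero
  rw [intervalIntegral.integral_const_mul]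
  have hsplit : ∫ θ in (0:ℝ)..(π/2),
      (1/4 - Real.cos (2*θ)/4 - Real.cos (2*(m*θ))/4
        + Real.cos (2*(m*θ) + 2*θ)/8 + Real.cos (2*(m*θ) - 2*θ)/8)
      = π/8 := by
    have e1 := hcont 2
    have e2 : IntervalIntegrable (fun θ => Real.cos (2*(m*θ))) volume 0 (π/2) := by
      have : ∀ θ:ℝ, 2*(m*θ) = (2*m)*θ := fun θ => by ring
      simp_rw [this]; exact hcont (2*m)
    have e3 : IntervalIntegrable (fun θ => Real.cos (2*(m*θ) + 2*θ)) volume 0 (π/2) := by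
      have : ∀ θ:ℝ, 2*(m*θ) + 2*θ = (2*m+2)*θ := fun θ => by ring
      simp_rw [this]; exact hcont (2*m+2)
    have e4 : IntervalIntegrable (fun θ => Real.cos (2*(m*θ) - 2*θ)) volume 0 (π/2) := by
      have : ∀ θ:ℝ, 2*(m*θ) - 2*θ = (2*m-2)*θ := fun θ => by ring
      simp_rw [this]; exact hcont (2*m-2)
    have hc4 : IntervalIntegrable (fun _ : ℝ => (1:ℝ)/4) volume 0 (π/2) :=
      intervalIntegrable_const
    rw [intervalIntegral.integral_add (((hc4.sub
          (e1.div_const 4)).sub (e2.div_const 4)).add (e3.div_const 8)) (e4.div_const 8),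
      intervalIntegral.integral_add ((hc4.sub
          (e1.div_const 4)).sub (e2.div_const 4)) (e3.div_const 8),
      intervalIntegral.integral_sub (hc4.sub (e1.div_const 4)) (e2.div_const 4),
      intervalIntegral.integral_sub hc4 (e1.div_const 4),
      intervalIntegral.integral_div, intervalIntegral.integral_div,
      intervalIntegral.integral_div, intervalIntegral.integral_div,
      intervalIntegral.integral_div,
      hI1, hI2, hI3, hI4, intervalIntegral.integral_const]
    simp
    ring
  rw [hsplit]
  field_simp
  norm_num
end

section
/- The pushforward of the arcsine measure μ under the map f_4(x) = 4·x·(1−x) equals μ itself; that is, the arcsine distribution on [0,1] is invariant under the logistic map with parameter r = 4. -/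
open Real MeasureTheory

/-- The arcsine measure on `[0,1]`: Lebesgue measure restricted to `[0,1]` with
density `x ↦ 1/(π·√(x·(1−x)))`. -/
noncomputable def arcsineMeasure : Measure ℝ :=
  (volume.restrict (Set.Icc (0 : ℝ) 1)).withDensity
    (fun x => ENNReal.ofReal (1 / (π * Real.sqrt (x * (1 - x)))))

namespace ArcsineAux

open Set

/-- The conjugating map `t ↦ sin²(πt/2)`. -/
noncomputable def G (t : ℝ) : ℝ := sin (π * t / 2) ^ 2

/-- Its inverse on `[0,1]`, `x ↦ (2/π)·arcsin √x`. -/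
noncomputable def H (x : ℝ) : ℝ := 2 / π * arcsin (√x)

lemma measurable_G : Measurable G :=
  ((Real.continuous_sin.comp (by continuity)).pow 2).measurable

lemma measurable_H : Measurable H :=
  (continuous_const.mul (Real.continuous_arcsin.comp Real.continuous_sqrt)).measurable

/-- 1-dimensional change of variables for measures. -/
lemma map_restrict_withDensity_deriv {s : Set ℝ} {f f' : ℝ → ℝ} (hs : MeasurableSet s)
    (hf' : ∀ x ∈ s, HasDerivWithinAt f (f' x) s x) (hf : Set.InjOn f s) (h'f : Measurable f) :
    Measure.map f ((volume.restrict s).withDensity fun x => ENNReal.ofReal |f' x|) =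
      volume.restrict (f '' s) := by
  simpa only [ContinuousLinearMap.det_toSpanSingleton] using
    map_withDensity_abs_det_fderiv_eq_addHaar volume hs.nullMeasurableSet
      (fun x hx => (hf' x hx).hasFDerivWithinAt) hf

lemma hasDeriv_H : ∀ x ∈ Ioo (0 : ℝ) 1,
    HasDerivWithinAt H (1 / (π * √(x * (1 - x)))) (Ioo (0 : ℝ) 1) x := by
  intro x hx
  obtain ⟨hx0, hx1⟩ := hx
  have hs0 : (0 : ℝ) < √x := Real.sqrt_pos.2 hx0
  have hs1' : (0 : ℝ) < √(1 - x) := Real.sqrt_pos.2 (by linarith)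
  have hs1 : √x < 1 := by
    have := Real.sqrt_lt_sqrt hx0.le hx1
    simpa using this
  have h1 : HasDerivAt (fun y : ℝ => √y) (1 / (2 * √x)) x := Real.hasDerivAt_sqrt (ne_of_gt hx0)
  have h2 : HasDerivAt arcsin (1 / √(1 - √x ^ 2)) (√x) :=
    Real.hasDerivAt_arcsin (by linarith) (ne_of_lt hs1)
  have h3 : HasDerivAt (fun y : ℝ => arcsin (√y)) (1 / √(1 - √x ^ 2) * (1 / (2 * √x))) x :=
    h2.comp x h1
  have h4 : HasDerivAt H (2 / π * (1 / √(1 - √x ^ 2) * (1 / (2 * √x)))) x := by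
    exact h3.const_mul (2 / π)
  have hval : 2 / π * (1 / √(1 - √x ^ 2) * (1 / (2 * √x))) = 1 / (π * √(x * (1 - x))) := by
    rw [Real.sq_sqrt hx0.le, Real.sqrt_mul hx0.le]
    have hπ : (0 : ℝ) < π := Real.pi_pos
    field_simp
  rw [hval] at h4
  exact h4.hasDerivWithinAt

lemma strictMonoOn_H : StrictMonoOn H (Ioo (0 : ℝ) 1) := by
  intro x hx y hy hxy
  have h2π : (0 : ℝ) < 2 / π := by positivity
  have hsx : √x < √y := Real.sqrt_lt_sqrt hx.1.le hxy
  have hy1 : √y ≤ 1 := by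
    have := Real.sqrt_le_sqrt hy.2.le
    simpa using this
  have harc : arcsin (√x) < arcsin (√y) :=
    Real.strictMonoOn_arcsin ⟨by linarith [Real.sqrt_nonneg x], hsx.le.trans hy1⟩
      ⟨by linarith [Real.sqrt_nonneg y], hy1⟩ hsx
  exact mul_lt_mul_of_pos_left harc h2π

lemma G_mem (y : ℝ) (hy : y ∈ Ioo (0 : ℝ) 1) : G y ∈ Ioo (0 : ℝ) 1 := by
  have hπ : (0 : ℝ) < π := Real.pi_pos
  have hθ0 : 0 < π * y / 2 := by nlinarith [hy.1]
  have hθ1 : π * y / 2 < π / 2 := by nlinarith [hy.2]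
  have hsin0 : 0 < sin (π * y / 2) :=
    Real.sin_pos_of_pos_of_lt_pi hθ0 (by linarith)
  have hsin1 : sin (π * y / 2) < 1 := by
    have := Real.strictMonoOn_sin ⟨by linarith, hθ1.le⟩
      (⟨by linarith, le_refl _⟩ : π / 2 ∈ Icc (-(π / 2)) (π / 2)) hθ1
    simpa using this
  constructor
  · exact pow_pos hsin0 2
  · calc sin (π * y / 2) ^ 2 < 1 ^ 2 := by nlinarith
      _ = 1 := one_pow 2

lemma H_G (y : ℝ) (hy : y ∈ Ioo (0 : ℝ) 1) : H (G y) = y := by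
  have hπ : (0 : ℝ) < π := Real.pi_pos
  have hθ0 : 0 < π * y / 2 := by nlinarith [hy.1]
  have hθ1 : π * y / 2 < π / 2 := by nlinarith [hy.2]
  have hsin0 : 0 ≤ sin (π * y / 2) :=
    (Real.sin_pos_of_pos_of_lt_pi hθ0 (by linarith)).le
  have : H (G y) = 2 / π * arcsin (sin (π * y / 2)) := by
    unfold H G
    rw [Real.sqrt_sq hsin0]
  rw [this, Real.arcsin_sin (by linarith) hθ1.le]
  field_simp

lemma G_H (x : ℝ) (hx : x ∈ Ioo (0 : ℝ) 1) : G (H x) = x := by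
  have hπ : π ≠ 0 := Real.pi_ne_zero
  have h1 : π * (2 / π * arcsin (√x)) / 2 = arcsin (√x) := by
    field_simp
  have hx1 : √x ≤ 1 := by
    have := Real.sqrt_le_sqrt hx.2.le
    simpa using this
  unfold G H
  rw [h1, Real.sin_arcsin (by linarith [Real.sqrt_nonneg x]) hx1, Real.sq_sqrt hx.1.le]

lemma image_H : H '' Ioo (0 : ℝ) 1 = Ioo (0 : ℝ) 1 := by
  ext y
  constructor
  · rintro ⟨x, hx, rfl⟩
    have hπ : (0 : ℝ) < π := Real.pi_pos
    have hs0 : (0 : ℝ) < √x := Real.sqrt_pos.2 hx.1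
    have hs1 : √x < 1 := by
      have := Real.sqrt_lt_sqrt hx.1.le hx.2
      simpa using this
    have ha0 : 0 < arcsin (√x) := Real.arcsin_pos.2 hs0
    have ha1 : arcsin (√x) < π / 2 := Real.arcsin_lt_pi_div_two.2 hs1
    constructor
    · have : (0 : ℝ) < 2 / π := by positivity
      exact mul_pos this ha0
    · have : 2 / π * arcsin (√x) < 2 / π * (π / 2) := by
        apply mul_lt_mul_of_pos_left ha1 (by positivity)
      calc H x < 2 / π * (π / 2) := this
        _ = 1 := by field_simp
  · intro hy
    exact ⟨G y, G_mem y hy, H_G y hy⟩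

/-- The density of the arcsine measure. -/
noncomputable def D (x : ℝ) : ENNReal := ENNReal.ofReal (1 / (π * √(x * (1 - x))))

lemma map_H : Measure.map H ((volume.restrict (Ioo (0 : ℝ) 1)).withDensity D) =
    volume.restrict (Ioo (0 : ℝ) 1) := by
  have hD : (fun x => ENNReal.ofReal |1 / (π * √(x * (1 - x)))|) = D := by
    funext x
    rw [abs_of_nonneg (by positivity)]
    rfl
  have := map_restrict_withDensity_deriv (f := H)
    (f' := fun x => 1 / (π * √(x * (1 - x)))) measurableSet_Ioo hasDeriv_H
    strictMonoOn_H.injOn measurable_H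
  rwa [hD, image_H] at this

lemma arcsine_eq : arcsineMeasure = (volume.restrict (Ioo (0 : ℝ) 1)).withDensity D := by
  unfold arcsineMeasure D
  rw [Measure.restrict_congr_set Ioo_ae_eq_Icc]

lemma arcsine_map_G : arcsineMeasure = Measure.map G (volume.restrict (Ioo (0 : ℝ) 1)) := by
  have hae : (G ∘ H) =ᵐ[(volume.restrict (Ioo (0 : ℝ) 1)).withDensity D] id := by
    have h1 : ∀ᵐ x ∂(volume.restrict (Ioo (0 : ℝ) 1)), x ∈ Ioo (0 : ℝ) 1 :=
      ae_restrict_mem measurableSet_Ioo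
    have h2 := (withDensity_absolutelyContinuous (volume.restrict (Ioo (0 : ℝ) 1)) D).ae_le h1
    filter_upwards [h2] with x hx
    exact G_H x hx
  have hmap : Measure.map (G ∘ H) ((volume.restrict (Ioo (0 : ℝ) 1)).withDensity D) =
      (volume.restrict (Ioo (0 : ℝ) 1)).withDensity D := by
    rw [Measure.map_congr hae, Measure.map_id]
  rw [arcsine_eq]
  conv_rhs => rw [← map_H, Measure.map_map measurable_G measurable_H, hmap]

lemma map_two_mul : Measure.map (fun t : ℝ => 2 * t) (volume.restrict (Ioc 0 (1 / 2 : ℝ))) =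
    ENNReal.ofReal (1 / 2) • volume.restrict (Ioc (0 : ℝ) 1) := by
  have hpre : (fun t : ℝ => 2 * t) ⁻¹' (Ioc (0 : ℝ) 1) = Ioc 0 (1 / 2 : ℝ) := by
    ext t
    simp only [mem_preimage, mem_Ioc]
    constructor <;> rintro ⟨h1, h2⟩ <;> constructor <;> linarith
  rw [← hpre, ← Measure.restrict_map (measurable_const_mul 2) measurableSet_Ioc]
  have : Measure.map (fun t : ℝ => 2 * t) volume = ENNReal.ofReal (1 / 2) • volume := by
    have := Real.map_volume_mul_left (a := 2) two_ne_zero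
    simpa [abs_of_nonneg] using this
  rw [this, Measure.restrict_smul]

lemma map_two_sub : Measure.map (fun t : ℝ => 2 - 2 * t) (volume.restrict (Ioo (1 / 2 : ℝ) 1)) =
    ENNReal.ofReal (1 / 2) • volume.restrict (Ioo (0 : ℝ) 1) := by
  have hpre : (fun t : ℝ => 2 - 2 * t) ⁻¹' (Ioo (0 : ℝ) 1) = Ioo (1 / 2 : ℝ) 1 := by
    ext t
    simp only [mem_preimage, mem_Ioo]
    constructor <;> rintro ⟨h1, h2⟩ <;> constructor <;> linarith
  have hmeas : Measurable (fun t : ℝ => 2 - 2 * t) :=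
    (measurable_const.sub (measurable_const_mul 2))
  rw [← hpre, ← Measure.restrict_map hmeas measurableSet_Ioo]
  have hcomp : (fun t : ℝ => 2 - 2 * t) = (fun u : ℝ => 2 + u) ∘ (fun t : ℝ => -2 * t) := by
    funext t; simp [Function.comp]; ring
  have : Measure.map (fun t : ℝ => 2 - 2 * t) volume = ENNReal.ofReal (1 / 2) • volume := by
    rw [hcomp, ← Measure.map_map (measurable_const_add 2) (measurable_const_mul (-2))]
    have h1 : Measure.map (fun t : ℝ => -2 * t) volume = ENNReal.ofReal (1 / 2) • volume := by
      have h := Real.map_volume_mul_left (a := -2) (by norm_num)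
      rw [show |(-2 : ℝ)⁻¹| = 1 / 2 by norm_num] at h
      exact h
    rw [h1, Measure.map_smul, MeasureTheory.map_add_left_eq_self volume 2]
  rw [this, Measure.restrict_smul]

lemma G_comp_two : G ∘ (fun t : ℝ => 2 * t) = fun t => sin (π * t) ^ 2 := by
  funext t
  simp only [Function.comp, G]
  congr 2
  ring

lemma G_comp_two_sub : G ∘ (fun t : ℝ => 2 - 2 * t) = fun t => sin (π * t) ^ 2 := by
  funext t
  simp only [Function.comp, G]
  have : π * (2 - 2 * t) / 2 = π - π * t := by ring
  rw [this, Real.sin_pi_sub]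

lemma map_S : Measure.map (fun t => sin (π * t) ^ 2) (volume.restrict (Ioo (0 : ℝ) 1)) =
    Measure.map G (volume.restrict (Ioo (0 : ℝ) 1)) := by
  have hS : Measurable (fun t => sin (π * t) ^ 2) :=
    ((Real.continuous_sin.comp (by continuity)).pow 2).measurable
  have hsplit : volume.restrict (Ioo (0 : ℝ) 1) =
      volume.restrict (Ioc 0 (1 / 2 : ℝ)) + volume.restrict (Ioo (1 / 2 : ℝ) 1) := by
    rw [← Measure.restrict_union ?_ measurableSet_Ioo, Ioc_union_Ioo_eq_Ioo (by norm_num)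
      (by norm_num)]
    · rw [Set.disjoint_left]
      rintro a ⟨_, h2⟩ ⟨h3, _⟩
      linarith
  have hIocIoo : volume.restrict (Ioc (0 : ℝ) 1) = volume.restrict (Ioo (0 : ℝ) 1) :=
    (Measure.restrict_congr_set Ioo_ae_eq_Ioc).symm
  calc Measure.map (fun t => sin (π * t) ^ 2) (volume.restrict (Ioo (0 : ℝ) 1))
      = Measure.map (fun t => sin (π * t) ^ 2) (volume.restrict (Ioc 0 (1 / 2 : ℝ)))
        + Measure.map (fun t => sin (π * t) ^ 2) (volume.restrict (Ioo (1 / 2 : ℝ) 1)) := by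
        rw [hsplit, Measure.map_add _ _ hS]
    _ = Measure.map (G ∘ (fun t : ℝ => 2 * t)) (volume.restrict (Ioc 0 (1 / 2 : ℝ)))
        + Measure.map (G ∘ (fun t : ℝ => 2 - 2 * t)) (volume.restrict (Ioo (1 / 2 : ℝ) 1)) := by
        rw [G_comp_two, G_comp_two_sub]
    _ = Measure.map G (Measure.map (fun t : ℝ => 2 * t) (volume.restrict (Ioc 0 (1 / 2 : ℝ))))
        + Measure.map G (Measure.map (fun t : ℝ => 2 - 2 * t)
            (volume.restrict (Ioo (1 / 2 : ℝ) 1))) := by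
        rw [← Measure.map_map measurable_G (measurable_const_mul 2),
          ← Measure.map_map (f := fun t : ℝ => 2 - 2 * t) measurable_G
            (measurable_const.sub (measurable_const_mul 2))]
    _ = ENNReal.ofReal (1 / 2) • Measure.map G (volume.restrict (Ioo (0 : ℝ) 1))
        + ENNReal.ofReal (1 / 2) • Measure.map G (volume.restrict (Ioo (0 : ℝ) 1)) := by
        rw [map_two_mul, map_two_sub, Measure.map_smul, Measure.map_smul, hIocIoo]
    _ = Measure.map G (volume.restrict (Ioo (0 : ℝ) 1)) := by
        rw [← add_smul, ← ENNReal.ofReal_add (by norm_num) (by norm_num)]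
        norm_num

lemma f4_comp_G : (fun x : ℝ => 4 * x * (1 - x)) ∘ G = fun t => sin (π * t) ^ 2 := by
  funext t
  simp only [Function.comp, G]
  have h2 := Real.sin_two_mul (π * t / 2)
  rw [show 2 * (π * t / 2) = π * t by ring] at h2
  have h3 := Real.sin_sq_add_cos_sq (π * t / 2)
  have h4 : 1 - sin (π * t / 2) ^ 2 = cos (π * t / 2) ^ 2 := by linarith
  rw [h2, h4]
  ring

end ArcsineAux

/-- The arcsine distribution is invariant under the logistic map `f₄(x) = 4·x·(1−x)`:
the pushforward of the arcsine measure under `f₄` equals the arcsine measure. -/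
theorem arcsine_invariant_under_logistic_four :
    Measure.map (fun x : ℝ => 4 * x * (1 - x)) arcsineMeasure = arcsineMeasure := by
  open ArcsineAux in
  have hf4 : Measurable (fun x : ℝ => 4 * x * (1 - x)) := by
    exact ((measurable_const.mul measurable_id).mul (measurable_const.sub measurable_id))
  conv_lhs => rw [ArcsineAux.arcsine_map_G]
  rw [Measure.map_map hf4 ArcsineAux.measurable_G, ArcsineAux.f4_comp_G, ArcsineAux.map_S,
    ← ArcsineAux.arcsine_map_G]
end
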